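/- Let q, t ∈ ℂ, let A be a unital associative ℂ-algebra, and let 𝖾, 𝖽 ∈ A satisfy 𝖽𝖾 − q·𝖾𝖽 = 1. Define polynomials H_n(x;t) ∈ ℂ[x] by H_0(x;t) = 1, H_1(x;t) = x, and x·H_n(x;t) = H_{n+1}(x;t) + t·[n]_q·H_{n−1}(x;t) for n ≥ 1. Then for every n ≥ 0, the evaluation of the polynomial H_n(·;t) at the element t·𝖾 + 𝖽 ∈ A equals Σ_{k=0}^{n} binom_q(n,k)·t^k·𝖾^k·𝖽^{n−k}. -/
import Mathlib


noncomputable section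

open scoped BigOperators

/-- The Gaussian (q-)binomial coefficient, characterized by
`qBinom q n 0 = 1`, `qBinom q 0 (k+1) = 0` and the Pascal-type rule
`qBinom q (n+1) (k+1) = q^(k+1) * qBinom q n (k+1) + qBinom q n k`. -/
def qBinom (q : ℂ) : ℕ → ℕ → ℂ
  | _, 0 => 1
  | 0, _ + 1 => 0
  | n + 1, k + 1 => q ^ (k + 1) * qBinom q n (k + 1) + qBinom q n k

/-- The monic continuous q-Hermite polynomials `H_n(x;t)`:
`H_0 = 1`, `H_1 = x`, and `x·H_n = H_{n+1} + t·[n]_q·H_{n-1}`. -/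
def qHermite (q t : ℂ) : ℕ → Polynomial ℂ
  | 0 => 1
  | 1 => Polynomial.X
  | n + 2 =>
      Polynomial.X * qHermite q t (n + 1)
        - Polynomial.C (t * ∑ i ∈ Finset.range (n + 1), q ^ i) * qHermite q t n

lemma qBinom_zero_right (q : ℂ) (n : ℕ) : qBinom q n 0 = 1 := by cases n <;> rfl

lemma qBinom_succ_succ (q : ℂ) (n k : ℕ) :
    qBinom q (n+1) (k+1) = q ^ (k+1) * qBinom q n (k+1) + qBinom q n k := rfl

lemma qBinom_eq_zero (q : ℂ) : ∀ n k, n < k → qBinom q n k = 0 := by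
  intro n
  induction n with
  | zero => intro k hk
            match k, hk with
            | k+1, _ => rfl
  | succ n ih =>
    intro k hk
    match k, hk with
    | k+1, hk =>
      rw [qBinom_succ_succ, ih (k+1) (by omega), ih k (by omega)]
      ring

lemma gs_split (q : ℂ) (a b : ℕ) :
    (∑ i ∈ Finset.range (a+b), q^i) =
      (∑ i ∈ Finset.range a, q^i) + q^a * ∑ i ∈ Finset.range b, q^i := by
  induction b with
  | zero => simp
  | succ b ih =>
    rw [show a + (b+1) = (a+b)+1 from rfl, geom_sum_succ', ih, geom_sum_succ']
    ring

lemma claimD (q : ℂ) : ∀ n k, (∑ i ∈ Finset.range (k+1), q^i) * qBinom q n (k+1)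
    = (∑ i ∈ Finset.range (n-k), q^i) * qBinom q n k := by
  intro n
  induction n with
  | zero =>
    intro k
    have h1 : qBinom q 0 (k+1) = 0 := qBinom_eq_zero q 0 (k+1) (by omega)
    simp [h1]
  | succ n ih =>
    intro k
    match k with
    | 0 =>
      have h0 : qBinom q n 1 = ∑ i ∈ Finset.range n, q^i := by
        simpa [qBinom_zero_right] using ih 0
      rw [qBinom_succ_succ, qBinom_zero_right, qBinom_zero_right, h0]
      simp [geom_sum_succ]
    | j+1 =>
      by_cases hj : j < n
      · have ih1 := ih (j+1)
        have ih2 := ih j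
        have hs1 : n - j = (n - (j+1)) + 1 := by omega
        have hs2 : n + 1 - (j+1) = (n - (j+1)) + 1 := by omega
        rw [hs1] at ih2
        rw [qBinom_succ_succ, qBinom_succ_succ q n j, hs2]
        have hS1 : (∑ i ∈ Finset.range (j+1+1), q^i)
            = q^(j+1) + ∑ i ∈ Finset.range (j+1), q^i := geom_sum_succ'
        have hS2 : (∑ i ∈ Finset.range ((n-(j+1))+1), q^i)
            = q * (∑ i ∈ Finset.range (n-(j+1)), q^i) + 1 := geom_sum_succ
        linear_combination q^(j+2) * ih1 + ih2 + qBinom q n (j+1) * hS1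
          - q^(j+1) * qBinom q n (j+1) * hS2
      · have h1 : qBinom q (n+1) (j+1+1) = 0 := qBinom_eq_zero q (n+1) (j+2) (by omega)
        have h2 : n + 1 - (j+1) = 0 ∨ qBinom q (n+1) (j+1) = 0 := by
          rcases Nat.lt_or_ge n (j+1) with h | h
          · exact Or.inl (by omega)
          · exact Or.inr (qBinom_eq_zero q (n+1) (j+1) (by omega))
        rcases h2 with h2 | h2 <;> simp [h1, h2]

lemma claimB (q : ℂ) (n k : ℕ) : (∑ i ∈ Finset.range (k+1), q^i) * qBinom q (n+1) (k+1)
    = (∑ i ∈ Finset.range (n+1), q^i) * qBinom q n k := by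
  by_cases hk : k ≤ n
  · have hsplit : (∑ i ∈ Finset.range (n+1), q^i)
        = (∑ i ∈ Finset.range (k+1), q^i) + q^(k+1) * ∑ i ∈ Finset.range (n-k), q^i := by
      rw [show n+1 = (k+1)+(n-k) by omega, gs_split]
    rw [qBinom_succ_succ]
    linear_combination q^(k+1) * claimD q n k - qBinom q n k * hsplit
  · have h1 : qBinom q (n+1) (k+1) = 0 := qBinom_eq_zero q (n+1) (k+1) (by omega)
    have h2 : qBinom q n k = 0 := qBinom_eq_zero q n k (by omega)
    simp [h1, h2]

lemma dpow {A : Type*} [Ring A] [Algebra ℂ A] (q : ℂ) (e d : A)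
    (h : d * e - q • (e * d) = 1) :
    ∀ k : ℕ, d * e ^ (k+1)
      = q^(k+1) • (e^(k+1) * d) + (∑ i ∈ Finset.range (k+1), q^i) • e^k := by
  have hde : d * e = q • (e * d) + 1 := by linear_combination (norm := module) h
  intro k
  induction k with
  | zero => simpa using hde
  | succ k ih =>
    rw [pow_succ (e) (k+1), ← mul_assoc, ih, add_mul, smul_mul_assoc, smul_mul_assoc,
      mul_assoc, hde, geom_sum_succ' (x := q) (n := k+1)]
    rw [mul_add, mul_one, mul_smul_comm, ← pow_succ, ← mul_assoc, ← pow_succ]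
    match_scalars <;> ring

lemma keyL {A : Type*} [Ring A] [Algebra ℂ A] (q t : ℂ) (e d : A)
    (h : d * e - q • (e * d) = 1) (n : ℕ) :
    (t • e + d) * (∑ k ∈ Finset.range (n+2), (qBinom q (n+1) k * t^k) • (e^k * d^(n+1-k)))
      = (∑ k ∈ Finset.range (n+3), (qBinom q (n+2) k * t^k) • (e^k * d^(n+2-k)))
        + (t * ∑ i ∈ Finset.range (n+1), q^i) •
          (∑ k ∈ Finset.range (n+1), (qBinom q n k * t^k) • (e^k * d^(n-k))) := by
  have step1 : (t • e + d) *
      (∑ k ∈ Finset.range (n+2), (qBinom q (n+1) k * t^k) • (e^k * d^(n+1-k)))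
      = (∑ k ∈ Finset.range (n+2), (qBinom q (n+1) k * t^(k+1)) • (e^(k+1) * d^(n+1-k)))
        + ∑ k ∈ Finset.range (n+2), (qBinom q (n+1) k * t^k) • (d * (e^k * d^(n+1-k))) := by
    rw [Finset.mul_sum, ← Finset.sum_add_distrib]
    refine Finset.sum_congr rfl fun k _ => ?_
    rw [mul_smul_comm, add_mul, smul_mul_assoc, ← mul_assoc, ← pow_succ', smul_add]
    match_scalars <;> ring
  have step2 : (∑ k ∈ Finset.range (n+2), (qBinom q (n+1) k * t^k) • (d * (e^k * d^(n+1-k))))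
      = d^(n+2) + ∑ j ∈ Finset.range (n+1),
          ((q^(j+1) * (qBinom q (n+1) (j+1) * t^(j+1))) • (e^(j+1) * d^((n-j)+1))
            + ((qBinom q (n+1) (j+1) * t^(j+1)) * (∑ i ∈ Finset.range (j+1), q^i))
                • (e^j * d^(n-j))) := by
    rw [Finset.sum_range_succ']
    rw [add_comm]
    congr 1
    · rw [qBinom_zero_right]
      simp [← pow_succ']
    · refine Finset.sum_congr rfl fun j _ => ?_
      have hsub : n + 1 - (j+1) = n - j := by omega
      rw [hsub, ← mul_assoc, dpow q e d h j, add_mul, smul_mul_assoc, smul_mul_assoc,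
        mul_assoc, ← pow_succ']
      rw [smul_add]
      match_scalars <;> ring
  have step3 : (∑ k ∈ Finset.range (n+3), (qBinom q (n+2) k * t^k) • (e^k * d^(n+2-k)))
      = d^(n+2)
        + (∑ j ∈ Finset.range (n+1),
            (q^(j+1) * (qBinom q (n+1) (j+1) * t^(j+1))) • (e^(j+1) * d^((n-j)+1)))
        + ∑ k ∈ Finset.range (n+2), (qBinom q (n+1) k * t^(k+1)) • (e^(k+1) * d^(n+1-k)) := by
    rw [Finset.sum_range_succ']
    have f0 : (qBinom q (n+2) 0 * t^0) • (e^0 * d^(n+2-0)) = d^(n+2) := by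
      rw [qBinom_zero_right]; simp
    rw [f0]
    have hterm : ∀ j ∈ Finset.range (n+2),
        (qBinom q (n+2) (j+1) * t^(j+1)) • (e^(j+1) * d^(n+2-(j+1)))
        = (q^(j+1) * (qBinom q (n+1) (j+1) * t^(j+1))) • (e^(j+1) * d^(n+1-j))
          + (qBinom q (n+1) j * t^(j+1)) • (e^(j+1) * d^(n+1-j)) := by
      intro j _
      have hsub : n + 2 - (j+1) = n + 1 - j := by omega
      rw [hsub, qBinom_succ_succ, add_mul, add_smul]
      match_scalars <;> ring
    rw [Finset.sum_congr rfl hterm, Finset.sum_add_distrib]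
    have hlast : (∑ j ∈ Finset.range (n+2),
        (q^(j+1) * (qBinom q (n+1) (j+1) * t^(j+1))) • (e^(j+1) * d^(n+1-j)))
        = ∑ j ∈ Finset.range (n+1),
            (q^(j+1) * (qBinom q (n+1) (j+1) * t^(j+1))) • (e^(j+1) * d^((n-j)+1)) := by
      rw [Finset.sum_range_succ, qBinom_eq_zero q (n+1) (n+2) (by omega)]
      simp only [mul_zero, zero_mul, zero_smul, add_zero]
      refine Finset.sum_congr rfl fun j hj => ?_
      have : n + 1 - j = (n - j) + 1 := by
        have := Finset.mem_range.mp hj; omega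
      rw [this]
    have hS1 : (∑ j ∈ Finset.range (n+2),
        (qBinom q (n+1) j * t^(j+1)) • (e^(j+1) * d^(n+1-j)))
        = ∑ k ∈ Finset.range (n+2), (qBinom q (n+1) k * t^(k+1)) • (e^(k+1) * d^(n+1-k)) := rfl
    rw [hlast, hS1]
    abel
  have step4 : (t * ∑ i ∈ Finset.range (n+1), q^i) •
      (∑ k ∈ Finset.range (n+1), (qBinom q n k * t^k) • (e^k * d^(n-k)))
      = ∑ j ∈ Finset.range (n+1),
          ((qBinom q (n+1) (j+1) * t^(j+1)) * (∑ i ∈ Finset.range (j+1), q^i))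
            • (e^j * d^(n-j)) := by
    rw [Finset.smul_sum]
    refine Finset.sum_congr rfl fun j _ => ?_
    rw [smul_smul]
    congr 1
    linear_combination (-t^(j+1)) * claimB q n j
  rw [step1, step2, step3, step4, Finset.sum_add_distrib]
  abel

theorem stmt10 (q t : ℂ) (A : Type*) [Ring A] [Algebra ℂ A] (e d : A)
    (h : d * e - q • (e * d) = 1) :
    ∀ n : ℕ,
      Polynomial.aeval (t • e + d) (qHermite q t n) =
        ∑ k ∈ Finset.range (n + 1), (qBinom q n k * t ^ k) • (e ^ k * d ^ (n - k)) := by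
  have main : ∀ n : ℕ,
      (Polynomial.aeval (t • e + d) (qHermite q t n) =
        ∑ k ∈ Finset.range (n + 1), (qBinom q n k * t ^ k) • (e ^ k * d ^ (n - k)))
      ∧ (Polynomial.aeval (t • e + d) (qHermite q t (n+1)) =
        ∑ k ∈ Finset.range (n + 2), (qBinom q (n+1) k * t ^ k) • (e ^ k * d ^ (n + 1 - k))) := by
    intro n
    induction n with
    | zero =>
      constructor
      · simp [qHermite, qBinom_zero_right]
      · rw [show qHermite q t 1 = Polynomial.X from rfl]
        rw [Finset.sum_range_succ, Finset.sum_range_succ]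
        simp [qBinom_zero_right, show qBinom q 1 1 = 1 by
          rw [qBinom_succ_succ, qBinom_zero_right, qBinom_eq_zero q 0 1 (by omega)]; ring]
        abel
    | succ n ih =>
      refine ⟨ih.2, ?_⟩
      rw [show qHermite q t (n+2) = Polynomial.X * qHermite q t (n + 1)
            - Polynomial.C (t * ∑ i ∈ Finset.range (n + 1), q ^ i) * qHermite q t n from rfl]
      rw [map_sub, map_mul, map_mul, Polynomial.aeval_X, Polynomial.aeval_C,
        ih.1, ih.2, ← Algebra.smul_def, keyL q t e d h n]
      abel
  intro n
  exact (main n).1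

end
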